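/- Let S = {0,...,ℓ-1} × {0,...,h-1} be a rectangle and T ⊂ ℕ² a finite initial segment of height n, width m, and cardinality δ. Then S + T is the disjoint union of the four sets U₁ = {0,...,ℓ-2} × {0,...,h-2}, U₂ = (0,h-1) + {0,...,ℓ-2} × {0,...,n-1}, U₃ = (ℓ-1,0) + {0,...,m-1} × {0,...,h-2}, and U₄ = (ℓ-1,h-1) + T. Consequently |S + T| = (ℓ-1)(h-1) + (ℓ-1)n + m(h-1) + δ. -/
import Mathlib


open Pointwise

/-- Decomposition of the Minkowski sum of a rectangle `S = {0..ℓ-1}×{0..h-1}` with a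
finite initial segment `T` of height `n`, width `m`, cardinality `δ`, as the disjoint
union of four pieces; consequently `|S+T| = (ℓ-1)(h-1) + (ℓ-1)n + m(h-1) + δ`. -/
theorem stmt4 (ℓ h m n δ : ℕ) (hℓ : 0 < ℓ) (hh : 0 < h) (hn : 0 < n) (hm : 0 < m)
    (T : Finset (ℕ × ℕ))
    (hdc : ∀ p ∈ T, ∀ q : ℕ × ℕ, q.1 ≤ p.1 → q.2 ≤ p.2 → q ∈ T)
    (hwid : (m - 1, 0) ∈ T) (hht : (0, n - 1) ∈ T)
    (hb : ∀ p ∈ T, p.1 < m ∧ p.2 < n) (hδ : δ = T.card)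
    (S U1 U2 U3 U4 : Finset (ℕ × ℕ))
    (hS : S = Finset.range ℓ ×ˢ Finset.range h)
    (hU1 : U1 = Finset.range (ℓ - 1) ×ˢ Finset.range (h - 1))
    (hU2 : U2 = Finset.range (ℓ - 1) ×ˢ Finset.Ico (h - 1) (h - 1 + n))
    (hU3 : U3 = Finset.Ico (ℓ - 1) (ℓ - 1 + m) ×ˢ Finset.range (h - 1))
    (hU4 : U4 = T.image (fun p => (p.1 + (ℓ - 1), p.2 + (h - 1)))) :
    S + T = U1 ∪ U2 ∪ U3 ∪ U4 ∧
    Disjoint U1 U2 ∧ Disjoint U1 U3 ∧ Disjoint U1 U4 ∧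
    Disjoint U2 U3 ∧ Disjoint U2 U4 ∧ Disjoint U3 U4 ∧
    (S + T).card = (ℓ - 1) * (h - 1) + (ℓ - 1) * n + m * (h - 1) + δ := by
  have h0 : ((0 : ℕ), (0 : ℕ)) ∈ T := hdc _ hwid (0, 0) (Nat.zero_le _) (Nat.zero_le _)
  -- equality
  have heq : S + T = U1 ∪ U2 ∪ U3 ∪ U4 := by
    subst hS hU1 hU2 hU3 hU4
    ext ⟨x, y⟩
    simp only [Finset.mem_add, Finset.mem_union, Finset.mem_product, Finset.mem_range,
      Finset.mem_Ico, Finset.mem_image, Prod.exists, Prod.mk_add_mk, Prod.mk.injEq]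
    constructor
    · rintro ⟨a, b, ⟨ha, hb'⟩, p, q, hpq, hx, hy⟩
      subst hx hy
      obtain ⟨hp, hq⟩ := hb _ hpq
      rcases lt_or_ge (a + p) (ℓ - 1) with hx1 | hx1 <;>
        rcases lt_or_ge (b + q) (h - 1) with hy1 | hy1
      · exact Or.inl (Or.inl (Or.inl ⟨hx1, hy1⟩))
      · refine Or.inl (Or.inl (Or.inr ⟨hx1, hy1, ?_⟩))
        omega
      · refine Or.inl (Or.inr ⟨⟨hx1, by omega⟩, hy1⟩)
      · refine Or.inr ⟨p + a - (ℓ - 1), q + b - (h - 1), ?_, by omega, by omega⟩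
        exact hdc _ hpq _ (by omega) (by omega)
    · rintro (((⟨hx1, hy1⟩ | ⟨hx1, hy1, hy2⟩) | ⟨⟨hx1, hx2⟩, hy1⟩) | ⟨p, q, hpq, hx, hy⟩)
      · exact ⟨x, y, ⟨by omega, by omega⟩, 0, 0, h0, by omega, by omega⟩
      · refine ⟨x, h - 1, ⟨by omega, by omega⟩, 0, y - (h - 1), ?_, by omega, by omega⟩
        exact hdc _ hht _ (le_refl 0) (by omega)
      · refine ⟨ℓ - 1, y, ⟨by omega, by omega⟩, x - (ℓ - 1), 0, ?_, by omega, by omega⟩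
        exact hdc _ hwid _ (by obtain ⟨h1, h2⟩ := hb _ hwid; simp at h1 ⊢; omega) (le_refl 0)
      · exact ⟨ℓ - 1, h - 1, ⟨by omega, by omega⟩, p, q, hpq, by omega, by omega⟩
  -- disjointness
  have mem1 : ∀ p ∈ U1, p.1 < ℓ - 1 ∧ p.2 < h - 1 := by
    subst hU1; intro p hp; simpa [Finset.mem_product] using hp
  have mem2 : ∀ p ∈ U2, p.1 < ℓ - 1 ∧ h - 1 ≤ p.2 := by
    subst hU2; intro p hp; simp only [Finset.mem_product, Finset.mem_range, Finset.mem_Ico] at hp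
    exact ⟨hp.1, hp.2.1⟩
  have mem3 : ∀ p ∈ U3, ℓ - 1 ≤ p.1 ∧ p.2 < h - 1 := by
    subst hU3; intro p hp; simp only [Finset.mem_product, Finset.mem_range, Finset.mem_Ico] at hp
    exact ⟨hp.1.1, hp.2⟩
  have mem4 : ∀ p ∈ U4, ℓ - 1 ≤ p.1 ∧ h - 1 ≤ p.2 := by
    subst hU4; intro p hp
    simp only [Finset.mem_image, Prod.exists] at hp
    obtain ⟨a, b, _, hab⟩ := hp
    subst hab; exact ⟨Nat.le_add_left _ _, Nat.le_add_left _ _⟩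
  have d12 : Disjoint U1 U2 := by
    rw [Finset.disjoint_left]; intro p h1 h2
    have := (mem1 p h1).2; have := (mem2 p h2).2; omega
  have d13 : Disjoint U1 U3 := by
    rw [Finset.disjoint_left]; intro p h1 h2
    have := (mem1 p h1).1; have := (mem3 p h2).1; omega
  have d14 : Disjoint U1 U4 := by
    rw [Finset.disjoint_left]; intro p h1 h2
    have := (mem1 p h1).1; have := (mem4 p h2).1; omega
  have d23 : Disjoint U2 U3 := by
    rw [Finset.disjoint_left]; intro p h1 h2
    have := (mem2 p h1).1; have := (mem3 p h2).1; omega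
  have d24 : Disjoint U2 U4 := by
    rw [Finset.disjoint_left]; intro p h1 h2
    have := (mem2 p h1).1; have := (mem4 p h2).1; omega
  have d34 : Disjoint U3 U4 := by
    rw [Finset.disjoint_left]; intro p h1 h2
    have := (mem3 p h1).2; have := (mem4 p h2).2; omega
  refine ⟨heq, d12, d13, d14, d23, d24, d34, ?_⟩
  have c1 : U1.card = (ℓ - 1) * (h - 1) := by
    subst hU1; simp [Finset.card_product]
  have c2 : U2.card = (ℓ - 1) * n := by
    subst hU2; simp [Finset.card_product, Nat.card_Ico]
  have c3 : U3.card = m * (h - 1) := by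
    subst hU3; simp [Finset.card_product, Nat.card_Ico]
  have c4 : U4.card = δ := by
    subst hU4 hδ
    apply Finset.card_image_of_injective
    intro p q hpq
    simp only [Prod.mk.injEq] at hpq
    ext <;> omega
  rw [heq, Finset.card_union_of_disjoint, Finset.card_union_of_disjoint,
    Finset.card_union_of_disjoint d12, c1, c2, c3, c4]
  · simp [Finset.disjoint_union_left, d13, d23]
  · simp [Finset.disjoint_union_left, d14, d24, d34]
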